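/- For every weakly decreasing non-negative ℓ² sequence t and every M ≥ |t|_2², there exists a sequence t^(N) of finitely supported weakly decreasing non-negative sequences with |t^(N)|_2² = M for all N which converges pointwise to t. -/

import Mathlib

/-- For every weakly decreasing non-negative ℓ² sequence `t` and every `M ≥ |t|₂²`, there is a
sequence of finitely supported weakly decreasing non-negative sequences, each with squared 2-norm
exactly `M`, converging pointwise to `t`. -/
theorem stmt12 (t : ℕ → ℝ) (hanti : Antitone t) (h0 : ∀ k, 0 ≤ t k)
    (hsum : Summable fun k => t k ^ 2) (M : ℝ) (hM : (∑' k, t k ^ 2) ≤ M) :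
    ∃ T : ℕ → ℕ → ℝ,
      (∀ N, Antitone (T N)) ∧ (∀ N k, 0 ≤ T N k) ∧
      (∀ N, ∃ n : ℕ, ∀ i, n ≤ i → T N i = 0) ∧
      (∀ N, (∑' k, T N k ^ 2) = M) ∧
      ∀ k, Filter.Tendsto (fun N => T N k) Filter.atTop (nhds (t k)) := by
  set c : ℕ → ℝ := fun N => M - ∑ k ∈ Finset.range (N + 1), t k ^ 2 with hc
  have hpart : ∀ N, ∑ k ∈ Finset.range (N + 1), t k ^ 2 ≤ ∑' k, t k ^ 2 := fun N =>
    Summable.sum_le_tsum _ (fun k _ => sq_nonneg _) hsum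
  have hc0 : ∀ N, 0 ≤ c N := fun N => sub_nonneg.mpr ((hpart N).trans hM)
  have hcM : ∀ N, c N ≤ M := fun N =>
    sub_le_self _ (Finset.sum_nonneg fun k _ => sq_nonneg _)
  refine ⟨fun N k => if k ≤ N then Real.sqrt (t k ^ 2 + c N / (N + 1)) else 0, ?_, ?_, ?_, ?_, ?_⟩
  · intro N k j hkj
    by_cases hj : j ≤ N
    · have hk : k ≤ N := hkj.trans hj
      simp only [hj, hk, if_true]
      exact Real.sqrt_le_sqrt (by
        have := pow_le_pow_left₀ (h0 j) (hanti hkj) 2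
        linarith)
    · simp only [hj, if_false]
      by_cases hk : k ≤ N
      · simp only [hk, if_true]; exact Real.sqrt_nonneg _
      · simp [hk]
  · intro N k
    by_cases hk : k ≤ N
    · simp only [hk, if_true]; exact Real.sqrt_nonneg _
    · simp [hk]
  · intro N
    exact ⟨N + 1, fun i hi => by simp [Nat.not_le.mpr (by omega : N < i)]⟩
  · intro N
    have hsq : ∀ k ≤ N,
        (if k ≤ N then Real.sqrt (t k ^ 2 + c N / (N + 1)) else 0) ^ 2
          = t k ^ 2 + c N / (N + 1) := by
      intro k hk
      simp only [hk, if_true]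
      exact Real.sq_sqrt (add_nonneg (sq_nonneg _) (div_nonneg (hc0 N) (by positivity)))
    rw [tsum_eq_sum (s := Finset.range (N + 1))
        (fun k hk => by
          have hkN : ¬ k ≤ N := fun h => hk (Finset.mem_range.mpr (Nat.lt_succ_of_le h))
          simp [hkN])]
    rw [Finset.sum_congr rfl (fun k hk => hsq k (Nat.lt_succ_iff.mp (Finset.mem_range.mp hk)))]
    rw [Finset.sum_add_distrib, Finset.sum_const, Finset.card_range]
    have : (N + 1 : ℝ) ≠ 0 := by positivity
    field_simp [hc]
    have h2 : ((N:ℝ) + 1) * (c N / (N + 1)) = c N := by field_simp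
    rw [nsmul_eq_mul, Nat.cast_succ, h2]
    simp [hc]
  · intro k
    have hlim : Filter.Tendsto (fun N : ℕ => c N / (N + 1)) Filter.atTop (nhds 0) := by
      have hub : Filter.Tendsto (fun N : ℕ => M / (N + 1)) Filter.atTop (nhds 0) := by
        have := Filter.Tendsto.div_atTop (tendsto_const_nhds (x := M))
          (Filter.tendsto_atTop_add_const_right Filter.atTop 1 tendsto_natCast_atTop_atTop)
        exact this
      refine squeeze_zero (fun N => div_nonneg (hc0 N) (by positivity)) (fun N => ?_) hub
      exact div_le_div_of_nonneg_right (hcM N) (by positivity)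
    have hlim2 : Filter.Tendsto (fun N : ℕ => Real.sqrt (t k ^ 2 + c N / (N + 1)))
        Filter.atTop (nhds (t k)) := by
      have : Filter.Tendsto (fun N : ℕ => t k ^ 2 + c N / (N + 1)) Filter.atTop
          (nhds (t k ^ 2)) := by simpa using (tendsto_const_nhds.add hlim)
      have := (Real.continuous_sqrt.continuousAt.tendsto.comp this)
      simpa [Function.comp_def, Real.sqrt_sq (h0 k)] using this
    refine hlim2.congr' ?_
    filter_upwards [Filter.eventually_ge_atTop k] with N hN
    simp [hN]
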